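/- Let G be a finite simple graph with vertex set {v_1, ..., v_s} enumerated by N = (v_1, ..., v_s), and let k be a positive integer. Two edges v_i v_j and v_r v_l of G (with i < j and r < l) are called k-secant with respect to N if i < r < j < l and j - r ≥ k. If G contains no pair of k-secant edges with respect to N, then G is (2k+1)-colorable, i.e., its chromatic number is at most 2k+1. -/
import Mathlib

/-- Two edges `v_i v_j` and `v_r v_l` (with `i < j`, `r < l`) of a graph on `Fin s`
(whose enumeration is the natural order) are `k`-secant if `i < r < j < l` and `j - r ≥ k`. -/
def HasKSecantEdges {s : ℕ} (G : SimpleGraph (Fin s)) (k : ℕ) : Prop :=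
  ∃ i r j l : Fin s, i < r ∧ r < j ∧ j < l ∧ G.Adj i j ∧ G.Adj r l ∧ k ≤ j.val - r.val

private lemma coreBase {k : ℕ} (hk : 0 < k) {a b : ℕ} (hb : b ≤ a + 2*k)
    (σ : ℕ → Fin (2*k+1)) (hσ : Set.InjOn σ (Set.Ico a (a+k))) :
    ∃ c : ℕ → Fin (2*k+1),
      (∀ u v, a ≤ u → u < v → v ≤ b → c u ≠ c v) ∧
      (∀ v, v < a + k → c v = σ v) := by
  classical
  set img := (Finset.Ico a (a+k)).image σ with himg
  have himgcard : img.card = k := by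
    rw [himg, Finset.card_image_of_injOn (by rw [Finset.coe_Ico]; exact hσ), Nat.card_Ico]
    omega
  set R := (Finset.univ : Finset (Fin (2*k+1))) \ img with hRdef
  have hRcard : R.card = k + 1 := by
    rw [hRdef, Finset.card_sdiff_of_subset (Finset.subset_univ _), himgcard, Finset.card_univ,
      Fintype.card_fin]
    omega
  set e := R.orderIsoOfFin hRcard with he
  refine ⟨fun v => if v < a + k then σ v else
      if h : v - (a+k) < k + 1 then (e ⟨v - (a+k), h⟩ : Fin (2*k+1)) else ⟨0, by omega⟩,
    ?_, ?_⟩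
  · intro u v hau huv hvb
    dsimp only
    by_cases hv : v < a + k
    · rw [if_pos hv, if_pos (by omega)]
      intro hEq
      exact absurd (hσ ⟨hau, by omega⟩ ⟨by omega, hv⟩ hEq) (by omega)
    · have hv2 : v - (a+k) < k + 1 := by omega
      rw [if_neg hv]
      simp only [dif_pos hv2]
      have hmemv : ((e ⟨v - (a+k), hv2⟩ : {x // x ∈ R}) : Fin (2*k+1)) ∈ R :=
        (e ⟨v - (a+k), hv2⟩).2
      by_cases hu : u < a + k
      · rw [if_pos hu]
        intro hEq
        have hnot : ((e ⟨v - (a+k), hv2⟩ : {x // x ∈ R}) : Fin (2*k+1)) ∉ img :=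
          (Finset.mem_sdiff.mp hmemv).2
        exact hnot (by
          rw [← hEq]
          exact Finset.mem_image.mpr ⟨u, Finset.mem_Ico.mpr ⟨hau, hu⟩, rfl⟩)
      · have hu2 : u - (a+k) < k + 1 := by omega
        rw [if_neg hu]
        simp only [dif_pos hu2]
        intro hEq
        have h2 := e.injective (Subtype.ext hEq)
        have h3 : u - (a+k) = v - (a+k) := congrArg Fin.val h2
        omega
  · intro v hv; dsimp only; rw [if_pos hv]

private lemma core {k : ℕ} (E : ℕ → ℕ → Prop) (hk : 0 < k)
    (hshort : ∀ u v, u < v → v ≤ u + k → E u v)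
    (hsec : ∀ a r j l : ℕ, a < r → r < j → j < l → E a j → E r l → j - r < k) :
    ∀ n a b : ℕ, ∀ σ : ℕ → Fin (2*k+1), Set.InjOn σ (Set.Ico a (a+k)) → b - a ≤ n →
    ∃ c : ℕ → Fin (2*k+1),
      (∀ u v, a ≤ u → u < v → v ≤ b → E u v → c u ≠ c v) ∧
      (∀ v, v < a + k → c v = σ v) ∧
      (∀ v, a ≤ v → v < a + k → v < b → c v ≠ c b) := by
  intro n
  induction n with
  | zero =>
    intro a b σ hσ hba
    obtain ⟨c, hc1, hc2⟩ := coreBase hk (by omega : b ≤ a + 2*k) σ hσ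
    exact ⟨c, fun u v h1 h2 h3 _ => hc1 u v h1 h2 h3, hc2,
      fun v h1 h2 h3 => hc1 v b h1 h3 le_rfl⟩
  | succ n ih =>
    intro a b σ hσ hba
    by_cases hsmall : b ≤ a + 2*k
    · obtain ⟨c, hc1, hc2⟩ := coreBase hk hsmall σ hσ
      exact ⟨c, fun u v h1 h2 h3 _ => hc1 u v h1 h2 h3, hc2,
        fun v h1 h2 h3 => hc1 v b h1 h3 le_rfl⟩
    · classical
      have hb : a + 2*k + 1 ≤ b := by omega
      set S : Finset ℕ := (Finset.Ico (a+1) b).filter (fun v => E a v) with hS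
      have hSne : S.Nonempty := by
        refine ⟨a+1, ?_⟩
        rw [hS, Finset.mem_filter, Finset.mem_Ico]
        exact ⟨⟨le_rfl, by omega⟩, hshort a (a+1) (by omega) (by omega)⟩
      set j := S.max' hSne with hj
      have hjmem : j ∈ S := S.max'_mem hSne
      rw [hS, Finset.mem_filter, Finset.mem_Ico] at hjmem
      have hjE : E a j := hjmem.2
      have hj1 : a + 1 ≤ j := hjmem.1.1
      have hj2 : j < b := hjmem.1.2
      have hjmax : ∀ v, a < v → v < b → E a v → v ≤ j := by
        intro v h1 h2 hE
        exact S.le_max' v (by rw [hS, Finset.mem_filter, Finset.mem_Ico]; exact ⟨⟨h1, h2⟩, hE⟩)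
      set t := max (a+1) (j+1-k) with ht
      have hta : a < t := by omega
      have htb : t + k ≤ b := by omega
      -- cut property: the only possible edge jumping the window is (a, b)
      have KC : ∀ u v, a ≤ u → u < t → t + k ≤ v → v ≤ b → E u v → u = a ∧ v = b := by
        intro u v hau hut htv hvb hE
        rcases Nat.eq_or_lt_of_le hau with heq | hau'
        · subst heq
          refine ⟨rfl, ?_⟩
          by_contra hne
          have := hjmax v (by omega) (by omega) hE
          omega
        · exfalso
          have hujk : u + k ≤ j := by omega
          have := hsec a u j v (by omega) (by omega) (by omega) hjE hE
          omega
      obtain ⟨cA, hA1, hA2, hA3⟩ := ih a (t+k-1) σ hσ (by omega)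
      have hσB : Set.InjOn cA (Set.Ico t (t+k)) := by
        intro u hu v hv huv
        simp only [Set.mem_Ico] at hu hv
        by_contra hne
        rcases Nat.lt_or_ge u v with hlt | hge
        · exact hA1 u v (by omega) hlt (by omega) (hshort u v hlt (by omega)) huv
        · have hlt : v < u := by omega
          exact hA1 v u (by omega) hlt (by omega) (hshort v u hlt (by omega)) huv.symm
      obtain ⟨cB, hB1, hB2, hB3⟩ := ih t b cA hσB (by omega)
      set bad : Finset (Fin (2*k+1)) :=
        ((Finset.Ico t (t+k)) ∪ (Finset.Ico a (a+k))).image cA with hbad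
      have hbadcard : bad.card < 2*k+1 := by
        calc bad.card ≤ ((Finset.Ico t (t+k)) ∪ (Finset.Ico a (a+k))).card :=
              Finset.card_image_le
          _ ≤ (Finset.Ico t (t+k)).card + (Finset.Ico a (a+k)).card := Finset.card_union_le _ _
          _ = k + k := by rw [Nat.card_Ico, Nat.card_Ico]; omega
          _ < 2*k+1 := by omega
      have hδex : ∃ δ : Fin (2*k+1), δ ∉ bad := by
        by_contra hcon
        push_neg at hcon
        have hsub : (Finset.univ : Finset (Fin (2*k+1))) ⊆ bad := fun x _ => hcon x
        have := Finset.card_le_card hsub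
        rw [Finset.card_univ, Fintype.card_fin] at this
        omega
      obtain ⟨δ, hδ⟩ := hδex
      set τ := Equiv.swap (cB b) δ with hτ
      have hcBbW : ∀ w, t ≤ w → w < t + k → cB w ≠ cB b := fun w h1 h2 => hB3 w h1 h2 (by omega)
      have hfix : ∀ w, t ≤ w → w < t + k → τ (cB w) = cB w := by
        intro w h1 h2
        refine Equiv.swap_apply_of_ne_of_ne (hcBbW w h1 h2) ?_
        intro hcontra
        apply hδ
        rw [hbad]
        refine Finset.mem_image.mpr ⟨w, ?_, ?_⟩
        · rw [Finset.mem_union, Finset.mem_Ico]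
          exact Or.inl ⟨h1, h2⟩
        · rw [← hB2 w h2, hcontra]
      refine ⟨fun v => if v < t + k then cA v else τ (cB v), ?_, ?_, ?_⟩
      · have hcB' : ∀ w, t ≤ w →
            (if w < t + k then cA w else τ (cB w)) = τ (cB w) := by
          intro w h1
          by_cases h2 : w < t + k
          · rw [if_pos h2, hfix w h1 h2, hB2 w h2]
          · rw [if_neg h2]
        intro u v hau huv hvb hE
        dsimp only
        by_cases hv : v < t + k
        · have hu : u < t + k := by omega
          rw [if_pos hv, if_pos hu]
          exact hA1 u v hau huv (by omega) hE
        · by_cases hu : t ≤ u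
          · rw [hcB' u hu, hcB' v (by omega)]
            exact fun hEq => hB1 u v hu huv hvb hE (τ.injective hEq)
          · obtain ⟨hua, hvb'⟩ := KC u v hau (by omega) (by omega) hvb hE
            subst hua; subst hvb'
            rw [if_pos (by omega : u < t + k), if_neg hv]
            have hb' : τ (cB v) = δ := Equiv.swap_apply_left _ _
            rw [hb']
            intro hEq
            apply hδ
            rw [← hEq, hbad]
            refine Finset.mem_image.mpr ⟨u, ?_, rfl⟩
            rw [Finset.mem_union, Finset.mem_Ico, Finset.mem_Ico]
            exact Or.inr ⟨le_rfl, by omega⟩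
      · intro v hv
        dsimp only
        rw [if_pos (by omega : v < t + k)]
        exact hA2 v hv
      · intro v hav hv hvb
        dsimp only
        rw [if_pos (by omega : v < t + k), if_neg (by omega : ¬ b < t + k)]
        have hb' : τ (cB b) = δ := Equiv.swap_apply_left _ _
        rw [hb']
        intro hEq
        apply hδ
        rw [← hEq, hbad]
        refine Finset.mem_image.mpr ⟨v, ?_, rfl⟩
        rw [Finset.mem_union, Finset.mem_Ico, Finset.mem_Ico]
        exact Or.inr ⟨hav, hv⟩

theorem no_k_secant_colorable {s k : ℕ} (hk : 0 < k) (G : SimpleGraph (Fin s))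
    (h : ¬ HasKSecantEdges G k) : G.Colorable (2 * k + 1) := by
  classical
  set E : ℕ → ℕ → Prop := fun u v =>
    (u < v ∧ v ≤ u + k) ∨ (v < u ∧ u ≤ v + k) ∨
    (∃ (hu : u < s) (hv : v < s), G.Adj ⟨u, hu⟩ ⟨v, hv⟩) with hE
  have hshort : ∀ u v, u < v → v ≤ u + k → E u v := fun u v h1 h2 => Or.inl ⟨h1, h2⟩
  have hsec : ∀ a r j l : ℕ, a < r → r < j → j < l → E a j → E r l → j - r < k := by
    intro a r j l h1 h2 h3 e1 e2
    by_contra hcon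
    push_neg at hcon
    rcases e1 with ⟨_, hle⟩ | ⟨hlt, _⟩ | ⟨ha, hjj, hadj1⟩
    · omega
    · omega
    rcases e2 with ⟨_, hle⟩ | ⟨hlt, _⟩ | ⟨hr, hl, hadj2⟩
    · omega
    · omega
    exact h ⟨⟨a, ha⟩, ⟨r, hr⟩, ⟨j, hjj⟩, ⟨l, hl⟩, Fin.mk_lt_mk.mpr h1, Fin.mk_lt_mk.mpr h2,
      Fin.mk_lt_mk.mpr h3, hadj1, hadj2, hcon⟩
  obtain ⟨c, hc1, -, -⟩ := core E hk hshort hsec s 0 (s-1)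
      (fun v => if hv : v < 2*k+1 then ⟨v, hv⟩ else ⟨0, by omega⟩)
      (by
        intro u hu v hv hEq
        simp only [Set.mem_Ico] at hu hv
        dsimp only at hEq
        rw [dif_pos (by omega : u < 2*k+1), dif_pos (by omega : v < 2*k+1)] at hEq
        exact Fin.mk.injEq _ _ _ _ ▸ hEq)
      (by omega)
  refine ⟨SimpleGraph.Coloring.mk (fun v => c v.val) ?_⟩
  intro u v hadj
  have hus := u.isLt
  have hvs := v.isLt
  have hEuv : E u.val v.val := Or.inr (Or.inr ⟨hus, hvs, by simpa using hadj⟩)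
  have hEvu : E v.val u.val := Or.inr (Or.inr ⟨hvs, hus, by simpa using hadj.symm⟩)
  rcases Nat.lt_or_ge u.val v.val with hlt | hge
  · exact hc1 u.val v.val (Nat.zero_le _) hlt (by omega) hEuv
  · have hne : u.val ≠ v.val := fun hEq => (G.ne_of_adj hadj) (Fin.ext hEq)
    have hlt : v.val < u.val := by omega
    exact fun hEq => hc1 v.val u.val (Nat.zero_le _) hlt (by omega) hEvu hEq.symm
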